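/- In ℝ² with the maximum norm ‖·‖_∞, the projective tensor norm of the symmetrized tensor Sym(e₁⊗e₂) = (1/2)(e₁⊗e₂ + e₂⊗e₁) is at most 1/2, strictly less than the projective tensor norm of e₁⊗e₂, which equals 1. -/
import Mathlib


open scoped TensorProduct

/-- The projective tensor norm on `(Fin 2 → ℝ) ⊗ (Fin 2 → ℝ)`, where `Fin 2 → ℝ`
carries the maximum norm. -/
noncomputable def projNorm (x : (Fin 2 → ℝ) ⊗[ℝ] (Fin 2 → ℝ)) : ℝ :=
  sInf { r : ℝ | ∃ (m : ℕ) (a b : Fin m → Fin 2 → ℝ),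
    x = ∑ j : Fin m, (a j) ⊗ₜ[ℝ] (b j) ∧
    r = ∑ j : Fin m, ‖a j‖ * ‖b j‖ }

lemma norm_pi2 (a b : ℝ) : ‖(![a,b] : Fin 2 → ℝ)‖ = max |a| |b| := by
  apply le_antisymm
  · refine (pi_norm_le_iff_of_nonneg (by positivity)).2 ?_
    intro i; fin_cases i <;> simp [Real.norm_eq_abs, le_max_left, le_max_right]
  · refine max_le ?_ ?_
    · simpa [Real.norm_eq_abs] using norm_le_pi_norm (![a,b]) 0
    · simpa [Real.norm_eq_abs] using norm_le_pi_norm (![a,b]) 1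

/-- The functional `a ⊗ b ↦ a 0 * b 1` on the tensor product. -/
noncomputable def φ : (Fin 2 → ℝ) ⊗[ℝ] (Fin 2 → ℝ) →ₗ[ℝ] ℝ :=
  TensorProduct.lift (LinearMap.mk₂ ℝ (fun a b => a 0 * b 1)
    (fun a a' b => by simp [add_mul])
    (fun c a b => by simp [smul_eq_mul]; ring)
    (fun a b b' => by simp [mul_add])
    (fun c a b => by simp [smul_eq_mul]; ring))

@[simp] lemma φ_tmul (a b : Fin 2 → ℝ) : φ (a ⊗ₜ[ℝ] b) = a 0 * b 1 := rfl

lemma projNorm_bddBelow (x : (Fin 2 → ℝ) ⊗[ℝ] (Fin 2 → ℝ)) :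
    BddBelow { r : ℝ | ∃ (m : ℕ) (a b : Fin m → Fin 2 → ℝ),
      x = ∑ j : Fin m, (a j) ⊗ₜ[ℝ] (b j) ∧
      r = ∑ j : Fin m, ‖a j‖ * ‖b j‖ } := by
  refine ⟨0, ?_⟩
  rintro r ⟨m, a, b, -, rfl⟩
  positivity

/-- In `ℝ²` with the maximum norm, the projective norm of `Sym(e₁⊗e₂)` is at most `1/2`,
strictly smaller than the projective norm of `e₁⊗e₂`, which equals `1`. -/
theorem stmt5 :
    let e₁ : Fin 2 → ℝ := ![1, 0]
    let e₂ : Fin 2 → ℝ := ![0, 1]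
    projNorm (((1 : ℝ)/2) • (e₁ ⊗ₜ[ℝ] e₂ + e₂ ⊗ₜ[ℝ] e₁)) ≤ 1/2 ∧
    projNorm (e₁ ⊗ₜ[ℝ] e₂) = 1 ∧
    projNorm (((1 : ℝ)/2) • (e₁ ⊗ₜ[ℝ] e₂ + e₂ ⊗ₜ[ℝ] e₁)) < projNorm (e₁ ⊗ₜ[ℝ] e₂) := by
  intro e₁ e₂
  have he₁ : ‖e₁‖ = 1 := by
    show ‖(![1,0] : Fin 2 → ℝ)‖ = 1
    rw [norm_pi2]; norm_num
  have he₂ : ‖e₂‖ = 1 := by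
    show ‖(![0,1] : Fin 2 → ℝ)‖ = 1
    rw [norm_pi2]; norm_num
  -- the symmetrized tensor decomposition
  have hdec : ((1 : ℝ)/2) • (e₁ ⊗ₜ[ℝ] e₂ + e₂ ⊗ₜ[ℝ] e₁)
      = ∑ j : Fin 2, (![(1/4:ℝ) • ![1,1], (1/4:ℝ) • ![-1,1]] j) ⊗ₜ[ℝ]
          (![![(1:ℝ),1], ![1,-1]] j) := by
    have h1 : (![1,1] : Fin 2 → ℝ) = e₁ + e₂ := by ext i; fin_cases i <;> simp [e₁, e₂]
    have h2 : (![-1,1] : Fin 2 → ℝ) = -e₁ + e₂ := by ext i; fin_cases i <;> simp [e₁, e₂]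
    have h3 : (![(1:ℝ),-1] : Fin 2 → ℝ) = e₁ - e₂ := by ext i; fin_cases i <;> simp [e₁, e₂]
    rw [Fin.sum_univ_two]
    simp only [Matrix.cons_val_zero, Matrix.cons_val_one, Matrix.head_cons, h1, h2, h3]
    simp only [smul_neg, TensorProduct.tmul_add, TensorProduct.add_tmul,
      TensorProduct.tmul_sub, TensorProduct.sub_tmul, TensorProduct.neg_tmul,
      ← TensorProduct.smul_tmul', smul_add, smul_sub]
    module
  have hA : projNorm (((1 : ℝ)/2) • (e₁ ⊗ₜ[ℝ] e₂ + e₂ ⊗ₜ[ℝ] e₁)) ≤ 1/2 := by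
    refine csInf_le (projNorm_bddBelow _) ?_
    refine ⟨2, ![(1/4:ℝ) • ![1,1], (1/4:ℝ) • ![-1,1]], ![![(1:ℝ),1], ![1,-1]], hdec, ?_⟩
    rw [Fin.sum_univ_two]
    simp only [Matrix.cons_val_zero, Matrix.cons_val_one, Matrix.head_cons, norm_smul]
    simp [Real.norm_eq_abs, norm_pi2]
    norm_num
  have hB : projNorm (e₁ ⊗ₜ[ℝ] e₂) = 1 := by
    apply le_antisymm
    · refine csInf_le (projNorm_bddBelow _) ?_
      exact ⟨1, fun _ => e₁, fun _ => e₂, by simp, by simp [he₁, he₂]⟩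
    · refine le_csInf ⟨1, 1, fun _ => e₁, fun _ => e₂, by simp, by simp [he₁, he₂]⟩ ?_
      rintro r ⟨m, a, b, hx, rfl⟩
      have h1 : φ (e₁ ⊗ₜ[ℝ] e₂) = 1 := by simp [e₁, e₂]
      calc (1:ℝ) = φ (e₁ ⊗ₜ[ℝ] e₂) := h1.symm
        _ = ∑ j : Fin m, a j 0 * b j 1 := by rw [hx, map_sum]; simp
        _ ≤ ∑ j : Fin m, ‖a j‖ * ‖b j‖ := by
            refine Finset.sum_le_sum fun j _ => ?_
            calc a j 0 * b j 1 ≤ |a j 0 * b j 1| := le_abs_self _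
              _ = |a j 0| * |b j 1| := abs_mul _ _
              _ ≤ ‖a j‖ * ‖b j‖ := by
                  refine mul_le_mul ?_ ?_ (abs_nonneg _) (norm_nonneg _)
                  · simpa [Real.norm_eq_abs] using norm_le_pi_norm (a j) 0
                  · simpa [Real.norm_eq_abs] using norm_le_pi_norm (b j) 1
  refine ⟨hA, hB, ?_⟩
  calc projNorm (((1 : ℝ)/2) • (e₁ ⊗ₜ[ℝ] e₂ + e₂ ⊗ₜ[ℝ] e₁)) ≤ 1/2 := hA
    _ < 1 := by norm_num
    _ = projNorm (e₁ ⊗ₜ[ℝ] e₂) := hB.symm
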